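/- ∑_{n=0}^∞ (∑_{k=0}^{n-1} 1/(2k+1)^2) / (2n+1)^2 = π^4/384. -/

import Mathlib

open Real

set_option maxHeartbeats 1000000 in
lemma odd_sq_hasSum : HasSum (fun k : ℕ => (1 : ℝ) / ((2 * k + 1 : ℕ) : ℝ) ^ 2) (Real.pi ^ 2 / 8) := by
  have htot := hasSum_zeta_two
  have hodd_summable : Summable (fun k : ℕ => (1 : ℝ) / ((2 * k + 1 : ℕ) : ℝ) ^ 2) := by
    have hinj : Function.Injective (fun k : ℕ => 2 * k + 1) := by
      intro x y hxy
      simp only at hxy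
      omega
    have := htot.summable.comp_injective hinj
    simpa only [Function.comp_def] using this
  have heven : HasSum (fun k : ℕ => (1 : ℝ) / ((2 * k : ℕ) : ℝ) ^ 2) (Real.pi ^ 2 / 24) := by
    have h := htot.mul_left (1 / 4)
    have hfe : (fun k : ℕ => (1 : ℝ) / ((2 * k : ℕ) : ℝ) ^ 2)
        = fun k : ℕ => 1 / 4 * ((1 : ℝ) / (k : ℝ) ^ 2) := by
      funext k
      push_cast
      rcases Nat.eq_zero_or_pos k with rfl | hk
      · simp
      · have : (k : ℝ) ≠ 0 := Nat.cast_ne_zero.mpr hk.ne'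
        field_simp; ring
    rw [hfe]
    convert h using 1
    · rfl
    ring
  have hcomb := HasSum.even_add_odd (f := fun n : ℕ => (1 : ℝ) / (n : ℝ) ^ 2) heven hodd_summable.hasSum
  have : Real.pi ^ 2 / 24 + ∑' k : ℕ, (1 : ℝ) / ((2 * k + 1 : ℕ) : ℝ) ^ 2 = Real.pi ^ 2 / 6 :=
    hcomb.unique htot
  have h2 : ∑' k : ℕ, (1 : ℝ) / ((2 * k + 1 : ℕ) : ℝ) ^ 2 = Real.pi ^ 2 / 8 := by linarith
  rw [← h2]; exact hodd_summable.hasSum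

set_option maxHeartbeats 1000000 in
lemma odd_four_hasSum : HasSum (fun k : ℕ => (1 : ℝ) / ((2 * k + 1 : ℕ) : ℝ) ^ 4) (Real.pi ^ 4 / 96) := by
  have htot := hasSum_zeta_four
  have hodd_summable : Summable (fun k : ℕ => (1 : ℝ) / ((2 * k + 1 : ℕ) : ℝ) ^ 4) := by
    have hinj : Function.Injective (fun k : ℕ => 2 * k + 1) := by
      intro x y hxy
      simp only at hxy
      omega
    have := htot.summable.comp_injective hinj
    simpa only [Function.comp_def] using this
  have heven : HasSum (fun k : ℕ => (1 : ℝ) / ((2 * k : ℕ) : ℝ) ^ 4) (Real.pi ^ 4 / 1440) := by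
    have h := htot.mul_left (1 / 16)
    have hfe : (fun k : ℕ => (1 : ℝ) / ((2 * k : ℕ) : ℝ) ^ 4)
        = fun k : ℕ => 1 / 16 * ((1 : ℝ) / (k : ℝ) ^ 4) := by
      funext k
      push_cast
      rcases Nat.eq_zero_or_pos k with rfl | hk
      · simp
      · have : (k : ℝ) ≠ 0 := Nat.cast_ne_zero.mpr hk.ne'
        field_simp; ring
    rw [hfe]
    convert h using 1
    · rfl
    ring
  have hcomb := HasSum.even_add_odd (f := fun n : ℕ => (1 : ℝ) / (n : ℝ) ^ 4) heven hodd_summable.hasSum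
  have : Real.pi ^ 4 / 1440 + ∑' k : ℕ, (1 : ℝ) / ((2 * k + 1 : ℕ) : ℝ) ^ 4 = Real.pi ^ 4 / 90 :=
    hcomb.unique htot
  have h2 : ∑' k : ℕ, (1 : ℝ) / ((2 * k + 1 : ℕ) : ℝ) ^ 4 = Real.pi ^ 4 / 96 := by linarith
  rw [← h2]; exact hodd_summable.hasSum

theorem euler_sum_odd :
    ∑' n : ℕ, (∑ k ∈ Finset.range n, 1 / ((2 * k + 1 : ℕ) : ℝ) ^ 2) / ((2 * n + 1 : ℕ) : ℝ) ^ 2 =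
      Real.pi ^ 4 / 384 := by
  set a : ℕ → ℝ := fun n => 1 / ((2 * n + 1 : ℕ) : ℝ) ^ 2 with ha
  set b : ℕ → ℝ := fun n => (∑ k ∈ Finset.range n, a k) * a n with hb
  have hS : HasSum a (Real.pi ^ 2 / 8) := odd_sq_hasSum
  have hA : HasSum (fun n => (a n) ^ 2) (Real.pi ^ 4 / 96) := by
    have := odd_four_hasSum
    convert this using 2 with n
    simp only [ha]
    rw [div_pow, one_pow, ← pow_mul]
  have hanonneg : ∀ n, 0 ≤ a n := fun n => by positivity
  -- finset identity
  have key : ∀ N : ℕ, (∑ n ∈ Finset.range N, a n) ^ 2 =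
      ∑ n ∈ Finset.range N, (a n) ^ 2 + 2 * ∑ n ∈ Finset.range N, b n := by
    intro N
    induction N with
    | zero => simp
    | succ N ih => simp [Finset.sum_range_succ, hb]; nlinarith [ih]
  -- summability of b
  have hble : ∀ n, b n ≤ (Real.pi ^ 2 / 8) * a n := by
    intro n
    have h1 : ∑ k ∈ Finset.range n, a k ≤ Real.pi ^ 2 / 8 :=
      sum_le_hasSum _ (fun i _ => hanonneg i) hS
    exact mul_le_mul_of_nonneg_right h1 (hanonneg n)
  have hbnonneg : ∀ n, 0 ≤ b n := fun n =>
    mul_nonneg (Finset.sum_nonneg fun i _ => hanonneg i) (hanonneg n)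
  have hbsum : Summable b :=
    Summable.of_nonneg_of_le hbnonneg hble (hS.summable.mul_left _)
  have hT : HasSum b (∑' n, b n) := hbsum.hasSum
  -- limits
  have l1 := (hS.tendsto_sum_nat.pow 2)
  have l2 := hA.tendsto_sum_nat
  have l3 := hT.tendsto_sum_nat
  have lcomb : Filter.Tendsto (fun N => (∑ n ∈ Finset.range N, a n) ^ 2)
      Filter.atTop (nhds (Real.pi ^ 4 / 96 + 2 * ∑' n, b n)) := by
    have := l2.add (l3.const_mul 2)
    simpa [key, mul_comm] using this
  have heq : (Real.pi ^ 2 / 8) ^ 2 = Real.pi ^ 4 / 96 + 2 * ∑' n, b n :=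
    tendsto_nhds_unique l1 lcomb
  have hTval : ∑' n, b n = Real.pi ^ 4 / 384 := by nlinarith [heq]
  rw [← hTval]
  apply tsum_congr
  intro n
  simp only [hb, ha]
  rw [div_eq_mul_one_div]
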